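/- Every connected (bull, C4)-free graph is either reducible, or basic, or has a one-point cutset. -/

import Mathlib

open SimpleGraph

variable {V : Type*}

/-- The bull: a triangle 0,1,2 with pendant vertices 3 (adjacent to 0) and 4 (adjacent to 1). -/
def bullGraph : SimpleGraph (Fin 5) :=
  SimpleGraph.fromRel (fun i j =>
    (i = 0 ∧ j = 1) ∨ (i = 0 ∧ j = 2) ∨ (i = 1 ∧ j = 2) ∨ (i = 0 ∧ j = 3) ∨ (i = 1 ∧ j = 4))

/-- The graph consisting of two independent edges: 0-1 and 2-3. -/
def twoK2 : SimpleGraph (Fin 4) :=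
  SimpleGraph.fromRel (fun i j => (i = 0 ∧ j = 1) ∨ (i = 2 ∧ j = 3))

/-- `G` has no induced subgraph isomorphic to `H`. -/
def IndFree {W : Type*} (H : SimpleGraph W) (G : SimpleGraph V) : Prop :=
  IsEmpty (H ↪g G)

/-- A graph is chordal if it has no induced cycle of length at least 4. -/
def Chordal (G : SimpleGraph V) : Prop :=
  ∀ n : ℕ, 4 ≤ n → IndFree (cycleGraph n) G

/-- A cap on a hole of length `n`: a cycle on `ZMod n` together with an extra vertex
adjacent to exactly the two adjacent hole vertices `0` and `1`. -/
def capGraph (n : ℕ) : SimpleGraph (Option (ZMod n)) :=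
  SimpleGraph.fromRel (fun a b =>
    match a, b with
    | some i, some j => j = i + 1
    | none, some i => i = 0 ∨ i = 1
    | _, _ => False)

/-- `x` dominates `y`: they are adjacent and every neighbour of `y` other than `x`
is a neighbour of `x`. -/
def Dominates (G : SimpleGraph V) (x y : V) : Prop :=
  G.Adj x y ∧ ∀ z, G.Adj y z → z ≠ x → G.Adj x z

/-- A graph is reducible if some vertex dominates an adjacent vertex. -/
def Reducible (G : SimpleGraph V) : Prop :=
  ∃ x y, Dominates G x y

/-- Two adjacent vertices with the same neighbours other than each other. -/
def TrueTwins (G : SimpleGraph V) (x y : V) : Prop :=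
  G.Adj x y ∧ ∀ z, z ≠ x → z ≠ y → (G.Adj x z ↔ G.Adj y z)

/-- A vertex is simplicial if its neighbourhood induces a clique. -/
def Simplicial (G : SimpleGraph V) (v : V) : Prop :=
  G.IsClique (G.neighborSet v)

/-- A universal vertex is adjacent to all other vertices. -/
def Universal (G : SimpleGraph V) (v : V) : Prop :=
  ∀ w, w ≠ v → G.Adj v w

/-- A graph is biconnected if it is connected and remains connected after
deleting any single vertex. -/
def Biconnected (G : SimpleGraph V) : Prop :=
  G.Connected ∧ ∀ v : V, (G.induce ({v}ᶜ : Set V)).Connected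

/-- A basic (cap-free) graph: a chordal graph, or a biconnected triangle-free graph
together with at most one additional vertex adjacent to all other vertices. -/
def IsBasic (G : SimpleGraph V) : Prop :=
  Chordal G ∨ (Biconnected G ∧ G.CliqueFree 3) ∨
    (∃ v : V, Universal G v ∧ Biconnected (G.induce ({v}ᶜ : Set V)) ∧
      (G.induce ({v}ᶜ : Set V)).CliqueFree 3)

/-- A one-point cutset: a vertex whose removal disconnects the graph. -/
def IsCutVertex (G : SimpleGraph V) (v : V) : Prop :=
  ¬ (G.induce ({v}ᶜ : Set V)).Connected

/-- `C` is (the vertex set of) a connected component of `G - v`. -/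
def IsComponentOf (G : SimpleGraph V) (v : V) (C : Set V) : Prop :=
  v ∉ C ∧ C.Nonempty ∧ (G.induce C).Connected ∧
    ∀ x ∈ C, ∀ y, G.Adj x y → y ≠ v → y ∈ C

/-- An amalgam partition `(K, A1, B1, A2, B2)` of `G`. -/
structure IsAmalgamPartition (G : SimpleGraph V) (K A1 B1 A2 B2 : Set V) : Prop where
  partition : ∀ v : V, (v ∈ K ∧ v ∉ A1 ∧ v ∉ B1 ∧ v ∉ A2 ∧ v ∉ B2) ∨
    (v ∉ K ∧ v ∈ A1 ∧ v ∉ B1 ∧ v ∉ A2 ∧ v ∉ B2) ∨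
    (v ∉ K ∧ v ∉ A1 ∧ v ∈ B1 ∧ v ∉ A2 ∧ v ∉ B2) ∨
    (v ∉ K ∧ v ∉ A1 ∧ v ∉ B1 ∧ v ∈ A2 ∧ v ∉ B2) ∨
    (v ∉ K ∧ v ∉ A1 ∧ v ∉ B1 ∧ v ∉ A2 ∧ v ∈ B2)
  A1_nonempty : A1.Nonempty
  A2_nonempty : A2.Nonempty
  K_clique : G.IsClique K
  side1_big : 2 ≤ (A1 ∪ B1).ncard
  side2_big : 2 ≤ (A2 ∪ B2).ncard
  A1A2_complete : ∀ a1 ∈ A1, ∀ a2 ∈ A2, G.Adj a1 a2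
  KA1_complete : ∀ k ∈ K, ∀ a ∈ A1, G.Adj k a
  KA2_complete : ∀ k ∈ K, ∀ a ∈ A2, G.Adj k a
  B1_sep : ∀ b ∈ B1, ∀ x ∈ A2 ∪ B2, ¬ G.Adj b x
  B2_sep : ∀ b ∈ B2, ∀ x ∈ A1 ∪ B1, ¬ G.Adj b x

/-- A clique cover of `G`: a finite family of cliques covering all vertices. -/
def IsCliqueCover (G : SimpleGraph V) (𝒞 : Finset (Set V)) : Prop :=
  (∀ s ∈ 𝒞, G.IsClique s) ∧ ∀ v : V, ∃ s ∈ 𝒞, v ∈ s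

/-- The clique cover number `θ(G)`. -/
noncomputable def cliqueCoverNumber (G : SimpleGraph V) : ℕ :=
  sInf {n : ℕ | ∃ 𝒞 : Finset (Set V), IsCliqueCover G 𝒞 ∧ 𝒞.card = n}

/-- A matching of `G`: a finite set of edges, pairwise vertex-disjoint. -/
def IsMatching' (G : SimpleGraph V) (M : Finset (Sym2 V)) : Prop :=
  (↑M : Set (Sym2 V)) ⊆ G.edgeSet ∧
    ∀ e ∈ M, ∀ f ∈ M, e ≠ f → ∀ v : V, v ∈ e → v ∉ f

/-- The maximum size `m(G)` of a matching of `G`. -/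
noncomputable def matchingNumber (G : SimpleGraph V) : ℕ :=
  sSup {n : ℕ | ∃ M : Finset (Sym2 V), IsMatching' G M ∧ M.card = n}

/-- An asteroidal triple: a stable triple such that between any two of its vertices
there is a path avoiding the closed neighbourhood of the third. -/
def IsAT (G : SimpleGraph V) (x y z : V) : Prop :=
  x ≠ y ∧ y ≠ z ∧ x ≠ z ∧ ¬ G.Adj x y ∧ ¬ G.Adj y z ∧ ¬ G.Adj x z ∧
    (∃ p : G.Walk x y, ∀ w ∈ p.support, w ≠ z ∧ ¬ G.Adj z w) ∧
    (∃ p : G.Walk y z, ∀ w ∈ p.support, w ≠ x ∧ ¬ G.Adj x w) ∧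
    (∃ p : G.Walk x z, ∀ w ∈ p.support, w ≠ y ∧ ¬ G.Adj y w)

def ATFree (G : SimpleGraph V) : Prop := ¬ ∃ x y z : V, IsAT G x y z

section Aux

lemma bull_aux (G : SimpleGraph V) (hb : IndFree bullGraph G) {x0 x1 x2 x3 x4 : V}
    (d03 : x0 ≠ x3) (d04 : x0 ≠ x4)
    (d13 : x1 ≠ x3) (d14 : x1 ≠ x4)
    (d23 : x2 ≠ x3) (d24 : x2 ≠ x4) (d34 : x3 ≠ x4)
    (e01 : G.Adj x0 x1) (e02 : G.Adj x0 x2) (e12 : G.Adj x1 x2)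
    (e03 : G.Adj x0 x3) (e14 : G.Adj x1 x4)
    (n04 : ¬ G.Adj x0 x4) (n13 : ¬ G.Adj x1 x3) (n23 : ¬ G.Adj x2 x3)
    (n24 : ¬ G.Adj x2 x4) (n34 : ¬ G.Adj x3 x4) : False := by
  have d01 : x0 ≠ x1 := e01.ne
  have d02 : x0 ≠ x2 := e02.ne
  have d12 : x1 ≠ x2 := e12.ne
  have n04' : ¬ G.Adj x4 x0 := fun h => n04 h.symm
  have n13' : ¬ G.Adj x3 x1 := fun h => n13 h.symm
  have n23' : ¬ G.Adj x3 x2 := fun h => n23 h.symm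
  have n24' : ¬ G.Adj x4 x2 := fun h => n24 h.symm
  have n34' : ¬ G.Adj x4 x3 := fun h => n34 h.symm
  refine hb.false ⟨⟨![x0,x1,x2,x3,x4], ?_⟩, ?_⟩
  · intro i j h
    fin_cases i <;> fin_cases j <;> simp_all
  · intro i j
    change G.Adj (![x0,x1,x2,x3,x4] i) (![x0,x1,x2,x3,x4] j) ↔ _
    fin_cases i <;> fin_cases j <;>
      simp [bullGraph, SimpleGraph.fromRel_adj, e01, e02, e12, e03, e14,
        e01.symm, e02.symm, e12.symm, e03.symm, e14.symm,
        n04, n13, n23, n24, n34, n04', n13', n23', n24', n34']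

lemma c4_aux (G : SimpleGraph V) (hc : IndFree (SimpleGraph.cycleGraph 4) G) {p q r s : V}
    (dpr : p ≠ r) (dqs : q ≠ s)
    (e1 : G.Adj p q) (e2 : G.Adj q r) (e3 : G.Adj r s) (e4 : G.Adj s p)
    (n1 : ¬ G.Adj p r) (n2 : ¬ G.Adj q s) : False := by
  have n1' : ¬ G.Adj r p := fun h => n1 h.symm
  have n2' : ¬ G.Adj s q := fun h => n2 h.symm
  refine hc.false ⟨⟨![p,q,r,s], ?_⟩, ?_⟩
  · have := e1.ne; have := e2.ne; have := e3.ne; have := e4.ne; have := e4.ne'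
    intro i j h
    fin_cases i <;> fin_cases j <;> simp_all
  · intro i j
    change G.Adj (![p,q,r,s] i) (![p,q,r,s] j) ↔ _
    fin_cases i <;> fin_cases j <;>
      simp [SimpleGraph.cycleGraph_adj, e1, e2, e3, e4,
        e1.symm, e2.symm, e3.symm, e4.symm, n1, n2, n1', n2'] <;> decide

lemma mirror (G : SimpleGraph V) (hb : IndFree bullGraph G)
    (hc : IndFree (SimpleGraph.cycleGraph 4) G) (hnr : ¬ Reducible G) {a b c : V}
    (eab : G.Adj a b) (eac : G.Adj a c) (ebc : G.Adj b c) :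
    ∃ z, G.Adj z b ∧ G.Adj z c ∧ ¬ G.Adj z a ∧ z ≠ a := by
  have key : ∀ x y, G.Adj x y → ∃ z, G.Adj y z ∧ z ≠ x ∧ ¬ G.Adj x z := by
    intro x y hxy
    by_contra h
    push_neg at h
    exact hnr ⟨x, y, hxy, fun z hz hne => h z hz hne⟩
  obtain ⟨z1, hz1b, hz1a, hz1na⟩ := key a b eab
  obtain ⟨z2, hz2c, hz2a, hz2na⟩ := key a c eac
  by_cases h1 : G.Adj z1 c
  · exact ⟨z1, hz1b.symm, h1, fun h => hz1na h.symm, hz1a⟩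
  by_cases h2 : G.Adj z2 b
  · exact ⟨z2, h2, hz2c.symm, fun h => hz2na h.symm, hz2a⟩
  have dz1c : z1 ≠ c := fun h => hz1na (h ▸ eac)
  have dz2b : z2 ≠ b := fun h => hz2na (h ▸ eab)
  have dz12 : z1 ≠ z2 := fun h => h2 (by rw [← h]; exact hz1b.symm)
  by_cases h12 : G.Adj z1 z2
  · -- induced C4: z1 - b - c - z2 - z1
    exact (c4_aux G hc dz1c (fun h => dz2b h.symm) hz1b.symm ebc hz2c h12.symm
      h1 (fun h => h2 h.symm)).elim
  · -- bull: triangle (b, c, a), pendants z1 on b, z2 on c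
    exact (bull_aux G hb hz1b.ne dz2b.symm dz1c.symm hz2c.ne hz1a.symm hz2a.symm dz12
      ebc eab.symm eac.symm hz1b hz2c
      (fun h => h2 h.symm) (fun h => h1 h.symm) hz1na hz2na h12).elim

lemma no_triangle (G : SimpleGraph V) (hb : IndFree bullGraph G)
    (hc : IndFree (SimpleGraph.cycleGraph 4) G) (hnr : ¬ Reducible G) {a b c : V}
    (eab : G.Adj a b) (eac : G.Adj a c) (ebc : G.Adj b c) : False := by
  obtain ⟨za, hzab, hzac, hzana, hzane⟩ := mirror G hb hc hnr eab eac ebc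
  obtain ⟨zb, hzba, hzbc, hzbnb, hzbne⟩ := mirror G hb hc hnr eab.symm ebc eac
  obtain ⟨zc, hzca, hzcb, hzcnc, hzcne⟩ := mirror G hb hc hnr eac.symm ebc.symm eab
  -- mirrors are pairwise nonadjacent
  have nab : ¬ G.Adj za zb := fun h =>
    c4_aux G hc hzane (fun h' => hzbne h'.symm) hzab eab.symm hzba.symm h.symm
      hzana (fun h' => hzbnb h'.symm)
  have nac : ¬ G.Adj za zc := fun h =>
    c4_aux G hc hzane (fun h' => hzcne h'.symm) hzac eac.symm hzca.symm h.symm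
      hzana (fun h' => hzcnc h'.symm)
  have nbc : ¬ G.Adj zb zc := fun h =>
    c4_aux G hc hzbne (fun h' => hzcne h'.symm) hzbc ebc.symm hzcb.symm h.symm
      hzbnb (fun h' => hzcnc h'.symm)
  -- final bull: triangle (b, c, za), pendants zc on b, zb on c
  have dazc : za ≠ zc := fun h => hzcnc (by rw [← h]; exact hzac)
  have dazb : za ≠ zb := fun h => hzana (by rw [h]; exact hzba)
  have dcb : zc ≠ zb := fun h => hzbnb (by rw [← h]; exact hzcb)
  exact bull_aux G hb hzcb.ne' (fun h => hzbne h.symm) (fun h => hzcne h.symm) hzbc.ne'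
    dazc dazb dcb
    ebc hzab.symm hzac.symm hzcb.symm hzbc.symm
    (fun h => hzbnb h.symm) (fun h => hzcnc h.symm) (fun h => nac h) (fun h => nab h) (fun h => nbc h.symm)

end Aux

/-- every connected (bull, C4)-free graph is reducible, or basic, or has a
one-point cutset. -/
theorem stmt6 [Fintype V] (G : SimpleGraph V) (hconn : G.Connected)
    (hb : IndFree bullGraph G) (hc : IndFree (SimpleGraph.cycleGraph 4) G) :
    Reducible G ∨ IsBasic G ∨ ∃ v : V, IsCutVertex G v := by
  by_cases hred : Reducible G
  · exact Or.inl hred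
  by_cases hcut : ∃ v : V, IsCutVertex G v
  · exact Or.inr (Or.inr hcut)
  refine Or.inr (Or.inl (Or.inr (Or.inl ⟨⟨hconn, ?_⟩, ?_⟩)))
  · intro v
    by_contra hv
    exact hcut ⟨v, hv⟩
  · classical
    intro s hs
    rw [SimpleGraph.is3Clique_iff] at hs
    obtain ⟨a, b', c', hab, hac, hbc, -⟩ := hs
    exact no_triangle G hb hc hred hab hac hbc
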